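/- If G is a claw-free finite simple graph, then for every integer k ≥ 1, deg(J(G)^{(k)}) = k · deg(J(G)); in particular deg(J(G)^{(k)}) is a linear function of k. -/

import Mathlib

open MvPolynomial

/-- `C` is a vertex cover of `G`: every edge is incident to a vertex of `C`. -/
def IsVertexCover {V : Type*} (G : SimpleGraph V) (C : Set V) : Prop :=
  ∀ ⦃a b : V⦄, G.Adj a b → a ∈ C ∨ b ∈ C

/-- `C` is a minimal vertex cover of `G`. -/
def IsMinVertexCover {V : Type*} (G : SimpleGraph V) (C : Set V) : Prop :=
  IsVertexCover G C ∧ ∀ D : Set V, D ⊂ C → ¬ IsVertexCover G D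

/-- `A` is an independent set of `G`. -/
def IsIndepSet {V : Type*} (G : SimpleGraph V) (A : Set V) : Prop :=
  ∀ ⦃a⦄, a ∈ A → ∀ ⦃b⦄, b ∈ A → ¬ G.Adj a b

/-- `A` is a maximal independent set of `G`. -/
def IsMaxIndepSet {V : Type*} (G : SimpleGraph V) (A : Set V) : Prop :=
  IsIndepSet G A ∧ ∀ B : Set V, IsIndepSet G B → A ⊆ B → A = B

/-- A graph is unmixed if all maximal independent sets have the same cardinality. -/
def Unmixed {V : Type*} (G : SimpleGraph V) : Prop :=
  ∀ A B : Set V, IsMaxIndepSet G A → IsMaxIndepSet G B → A.ncard = B.ncard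

/-- `G` has no isolated vertices. -/
def HasNoIsolatedVertex {V : Type*} (G : SimpleGraph V) : Prop :=
  ∀ v : V, ∃ w : V, G.Adj v w

/-- `G` is very well-covered: no isolated vertices, an even number of vertices, and every
maximal independent set has cardinality half the number of vertices. -/
def VeryWellCovered {V : Type*} [Fintype V] (G : SimpleGraph V) : Prop :=
  HasNoIsolatedVertex G ∧ Even (Fintype.card V) ∧
    ∀ A : Set V, IsMaxIndepSet G A → 2 * A.ncard = Fintype.card V

/-- `G` is claw-free: it has no induced subgraph isomorphic to `K_{1,3}`. -/
def ClawFree {V : Type*} (G : SimpleGraph V) : Prop :=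
  ¬ ∃ a b c d : V, G.Adj a b ∧ G.Adj a c ∧ G.Adj a d ∧
      ¬ G.Adj b c ∧ ¬ G.Adj b d ∧ ¬ G.Adj c d ∧ b ≠ c ∧ b ≠ d ∧ c ≠ d

/-- The graph obtained from `G` by deleting the vertices in `A`: it has the same vertex set,
and its edges are the edges of `G` avoiding `A` (so the vertices of `A` become isolated). -/
def deleteVerts {V : Type*} (G : SimpleGraph V) (A : Set V) : SimpleGraph V where
  Adj a b := G.Adj a b ∧ a ∉ A ∧ b ∉ A
  symm := ⟨fun a b ⟨h1, h2, h3⟩ => ⟨h1.symm, h3, h2⟩⟩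
  loopless := ⟨fun a h => G.loopless.irrefl a h.1⟩

/-- The closed neighborhood `N_G[F]` of a set of vertices `F`. -/
def closedNbhdSet {V : Type*} (G : SimpleGraph V) (F : Set V) : Set V :=
  ⋃ a ∈ F, insert a (G.neighborSet a)

/-- The cover ideal `J(G)` of the graph `G`:
the intersection of the ideals `(x_i, x_j)` over the edges `{x_i, x_j}` of `G`. -/
noncomputable def coverIdeal (K : Type*) [Field K] {V : Type*} (G : SimpleGraph V) :
    Ideal (MvPolynomial V K) :=
  ⨅ (p : V × V) (_ : G.Adj p.1 p.2), Ideal.span {X p.1, X p.2}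

/-- The `k`-th symbolic power `J(G)^{(k)}` of the cover ideal of `G`:
the intersection of the ideals `(x_i, x_j)^k` over the edges `{x_i, x_j}` of `G`
(the empty intersection being the unit ideal). -/
noncomputable def symbPow (K : Type*) [Field K] {V : Type*} (G : SimpleGraph V) (k : ℕ) :
    Ideal (MvPolynomial V K) :=
  ⨅ (p : V × V) (_ : G.Adj p.1 p.2), Ideal.span {X p.1, X p.2} ^ k

/-- The degree of a monomial with exponent vector `m`. -/
def mdeg {V : Type*} (m : V →₀ ℕ) : ℕ := m.sum fun _ e => e

/-- The monomial with exponent vector `m` is a minimal monomial generator of `I`. -/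
def IsMinGen {K : Type*} [Field K] {V : Type*} (I : Ideal (MvPolynomial V K)) (m : V →₀ ℕ) :
    Prop :=
  (monomial m (1 : K)) ∈ I ∧
    ∀ i : V, m i ≠ 0 → (monomial (m - Finsupp.single i 1) (1 : K)) ∉ I

/-- `deg I`: the maximum degree of a minimal monomial generator of `I`. -/
noncomputable def genDeg {K : Type*} [Field K] {V : Type*} (I : Ideal (MvPolynomial V K)) : ℕ :=
  sSup {d : ℕ | ∃ m : V →₀ ℕ, IsMinGen I m ∧ mdeg m = d}

attribute [local instance] Classical.propDecidable

lemma mono_mem_span_pow {V : Type*} [Fintype V] {K : Type*} [Field K]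
    {i j : V} (hij : i ≠ j) (m : V →₀ ℕ) (k : ℕ) :
    (monomial m (1:K)) ∈ (Ideal.span {X i, X j} : Ideal (MvPolynomial V K)) ^ k ↔
      k ≤ m i + m j := by
  constructor
  · intro hmem
    set g : V → Polynomial K := fun v => if v = i ∨ v = j then Polynomial.X else 1 with hg
    set φ : MvPolynomial V K →+* Polynomial K := (aeval g).toRingHom with hφ
    have himg : φ (monomial m (1:K)) = Polynomial.X ^ (m i + m j) := by
      have h1 : φ (monomial m (1:K)) = ∏ v ∈ m.support, g v ^ m v := by
        simp [hφ, aeval_monomial, Finsupp.prod]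
      rw [h1]
      have h2 : ∏ v ∈ m.support, g v ^ m v = ∏ v ∈ ({i, j} : Finset V), g v ^ m v := by
        have e1 : ∏ v ∈ m.support, g v ^ m v = ∏ v ∈ (Finset.univ : Finset V), g v ^ m v :=
          Finset.prod_subset (Finset.subset_univ m.support)
            (fun x _ hx => by simp [Finsupp.notMem_support_iff.1 hx])
        have e2 : ∏ v ∈ ({i, j} : Finset V), g v ^ m v
            = ∏ v ∈ (Finset.univ : Finset V), g v ^ m v := by
          apply Finset.prod_subset (Finset.subset_univ ({i,j} : Finset V))
          intro x _ hx
          simp only [Finset.mem_insert, Finset.mem_singleton] at hx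
          push_neg at hx
          simp [hg, hx.1, hx.2]
        rw [e1, ← e2]
      rw [h2, Finset.prod_pair hij]
      simp [hg, pow_add]
    have hmap : φ (monomial m (1:K)) ∈
        (Ideal.span {Polynomial.X} : Ideal (Polynomial K)) ^ k := by
      have := Ideal.mem_map_of_mem φ hmem
      rwa [Ideal.map_pow, Ideal.map_span, Set.image_insert_eq, Set.image_singleton,
        show φ (X i) = Polynomial.X by simp [hφ, hg],
        show φ (X j) = Polynomial.X by simp [hφ, hg],
        Set.insert_eq_self.2 (Set.mem_singleton _)] at this
    rw [himg, Ideal.span_singleton_pow, Ideal.mem_span_singleton] at hmap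
    have := Polynomial.natDegree_le_of_dvd hmap (pow_ne_zero _ Polynomial.X_ne_zero)
    simpa using this
  · intro hk
    set a := min k (m i) with ha
    set b := k - a with hb
    have hab : a + b = k := by omega
    have hai : a ≤ m i := by omega
    have hbj : b ≤ m j := by omega
    set s : V →₀ ℕ := Finsupp.single i a + Finsupp.single j b with hs
    have hsm : s ≤ m := by
      intro v
      simp only [hs, Finsupp.add_apply, Finsupp.single_apply]
      rcases eq_or_ne i v with rfl | h1
      · simp [if_neg (Ne.symm hij), hai]
      · rcases eq_or_ne j v with rfl | h2
        · simp [h1, hbj]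
        · simp [h1, h2]
    have hkey : (monomial m (1:K)) = monomial (m - s) (1:K) * monomial s (1:K) := by
      rw [monomial_mul, one_mul, tsub_add_cancel_of_le hsm]
    rw [hkey]
    apply Ideal.mul_mem_left
    have hXi : (X i : MvPolynomial V K) ∈ Ideal.span {X i, X j} :=
      Ideal.subset_span (by simp)
    have hXj : (X j : MvPolynomial V K) ∈ Ideal.span {X i, X j} :=
      Ideal.subset_span (by simp)
    have : (monomial s (1:K)) = X i ^ a * X j ^ b := by
      rw [X_pow_eq_monomial, X_pow_eq_monomial, monomial_mul, one_mul, hs]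
    rw [this, ← hab, pow_add]
    exact Ideal.mul_mem_mul (Ideal.pow_mem_pow hXi a) (Ideal.pow_mem_pow hXj b)

section Aux
variable {V : Type*} [Fintype V] {K : Type*} [Field K]

attribute [local instance] Classical.propDecidable

lemma symb_mem (G : SimpleGraph V) (k : ℕ) (m : V →₀ ℕ) :
    (monomial m (1:K)) ∈ symbPow K G k ↔ ∀ a b : V, G.Adj a b → k ≤ m a + m b := by
  unfold symbPow
  rw [Submodule.mem_iInf]
  constructor
  · intro h a b hab
    have := h (a, b)
    rw [Submodule.mem_iInf] at this
    exact (mono_mem_span_pow (G.ne_of_adj hab) m k).1 (this hab)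
  · intro h p
    rw [Submodule.mem_iInf]
    intro hp
    exact (mono_mem_span_pow (G.ne_of_adj hp) m k).2 (h p.1 p.2 hp)

lemma cover_eq_symbPow (G : SimpleGraph V) : coverIdeal K G = symbPow K G 1 := by
  unfold coverIdeal symbPow
  simp [pow_one]

lemma isMinGen_symbPow_iff (G : SimpleGraph V) (k : ℕ) (m : V →₀ ℕ) :
    IsMinGen (symbPow K G k) m ↔
      ((∀ a b : V, G.Adj a b → k ≤ m a + m b) ∧
       ∀ i : V, m i ≠ 0 → ∃ a b : V, G.Adj a b ∧
         ((m - Finsupp.single i 1 : V →₀ ℕ)) a + ((m - Finsupp.single i 1 : V →₀ ℕ)) b < k) := by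
  unfold IsMinGen
  rw [symb_mem]
  refine and_congr Iff.rfl (forall_congr' fun i => imp_congr Iff.rfl ?_)
  rw [symb_mem]
  push_neg
  rfl

/-- tight structure: every supported vertex has a tight edge and value ≤ k -/
lemma tight_structure {G : SimpleGraph V} {k : ℕ} {m : V →₀ ℕ}
    (h1 : ∀ a b : V, G.Adj a b → k ≤ m a + m b)
    {i : V} (hi : m i ≠ 0)
    (h2 : ∃ a b : V, G.Adj a b ∧
      ((m - Finsupp.single i 1 : V →₀ ℕ)) a + ((m - Finsupp.single i 1 : V →₀ ℕ)) b < k) :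
    m i ≤ k ∧ ∃ u : V, G.Adj i u ∧ m i + m u = k := by
  obtain ⟨a, b, hab, hred⟩ := h2
  have hne : a ≠ b := G.ne_of_adj hab
  have hsum : k ≤ m a + m b := h1 a b hab
  rw [Finsupp.tsub_apply, Finsupp.tsub_apply] at hred
  rcases eq_or_ne i a with rfl | hia
  · rw [Finsupp.single_eq_same, Finsupp.single_eq_of_ne' hne] at hred
    have hma : m i ≠ 0 := hi
    refine ⟨by omega, b, hab, by omega⟩
  · rcases eq_or_ne i b with rfl | hib
    · rw [Finsupp.single_eq_same, Finsupp.single_eq_of_ne' (Ne.symm hne)] at hred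
      exact ⟨by omega, a, hab.symm, by omega⟩
    · rw [Finsupp.single_eq_of_ne' hia, Finsupp.single_eq_of_ne' hib] at hred
      omega

lemma mdeg_eq_sum (m : V →₀ ℕ) : mdeg m = ∑ v, m v := by
  unfold mdeg
  rw [Finsupp.sum]
  exact Finset.sum_subset (Finset.subset_univ _)
    (fun x _ hx => Finsupp.notMem_support_iff.1 hx)

end Aux
section Comb
variable {V : Type*} [Fintype V]

attribute [local instance] Classical.propDecidable

/-- Matching in the "heavy-edge" auxiliary graph. -/
def IsMtch (G : SimpleGraph V) (k : ℕ) (y : V → ℕ) (M : Finset (V × V)) : Prop :=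
  (∀ e ∈ M, G.Adj e.1 e.2 ∧ y e.1 < k ∧ y e.2 < k ∧ k ≤ y e.1 + y e.2) ∧
  (∀ e ∈ M, ∀ e' ∈ M, e ≠ e' → e.1 ≠ e'.1 ∧ e.1 ≠ e'.2 ∧ e.2 ≠ e'.1 ∧ e.2 ≠ e'.2)

lemma exists_dominating (G : SimpleGraph V) (k : ℕ) (y : V → ℕ)
    (H : ∀ v : V, k ≤ y v ∨ ∃ u : V, G.Adj u v ∧ k ≤ y u + y v) :
    ∃ D : Finset V, (∀ v : V, v ∈ D ∨ ∃ u ∈ D, G.Adj u v) ∧ k * D.card ≤ ∑ v, y v := by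
  classical
  set T := (Finset.univ : Finset (Finset (V × V))).filter (IsMtch G k y) with hT
  have hTne : T.Nonempty := ⟨∅, by simp [hT, IsMtch]⟩
  obtain ⟨M, hMT, hMmax⟩ := T.exists_max_image Finset.card hTne
  have hM : IsMtch G k y M := (Finset.mem_filter.1 hMT).2
  have hmax : ∀ M' : Finset (V × V), IsMtch G k y M' → M'.card ≤ M.card := fun M' h' =>
    hMmax M' (Finset.mem_filter.2 ⟨Finset.mem_univ _, h'⟩)
  set cov : V → Prop := fun v => ∃ e ∈ M, v = e.1 ∨ v = e.2 with hcov
  set need : V → Prop := fun p => ∃ q, ¬ cov q ∧ G.Adj q p ∧ y q < k ∧ k ≤ y q + y p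
    with hneed
  set chosen : V × V → V := fun e => if need e.1 then e.1 else e.2 with hchosen
  have hchosen_mem : ∀ e : V × V, chosen e = e.1 ∨ chosen e = e.2 := by
    intro e
    simp only [hchosen]
    split_ifs <;> simp
  set A : Finset V := Finset.univ.filter (fun v => k ≤ y v) with hA
  set D : Finset V := A ∪ M.image chosen with hD
  have hnotcov : ∀ w : V, ¬ cov w → ∀ e ∈ M, w ≠ e.1 ∧ w ≠ e.2 := by
    intro w hw e he
    constructor
    · intro h; exact hw ⟨e, he, Or.inl h⟩
    · intro h; exact hw ⟨e, he, Or.inr h⟩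
  refine ⟨D, ?_, ?_⟩
  · -- domination
    intro v
    by_cases hvk : k ≤ y v
    · exact Or.inl (Finset.mem_union_left _ (Finset.mem_filter.2 ⟨Finset.mem_univ _, hvk⟩))
    push_neg at hvk
    obtain ⟨u, hadj, husum⟩ := (H v).resolve_left (by omega)
    by_cases huk : k ≤ y u
    · exact Or.inr ⟨u, Finset.mem_union_left _
        (Finset.mem_filter.2 ⟨Finset.mem_univ _, huk⟩), hadj⟩
    push_neg at huk
    by_cases hvcov : cov v
    · obtain ⟨e, heM, hve⟩ := hvcov
      have hadj12 : G.Adj e.1 e.2 := (hM.1 e heM).1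
      rcases hchosen_mem e with hce | hce <;> rcases hve with hv1 | hv1
      · exact Or.inl (Finset.mem_union_right _
          (Finset.mem_image.2 ⟨e, heM, by rw [hce, hv1]⟩))
      · refine Or.inr ⟨e.1, Finset.mem_union_right _
          (Finset.mem_image.2 ⟨e, heM, hce⟩), ?_⟩
        rw [hv1]; exact hadj12
      · refine Or.inr ⟨e.2, Finset.mem_union_right _
          (Finset.mem_image.2 ⟨e, heM, hce⟩), ?_⟩
        rw [hv1]; exact hadj12.symm
      · exact Or.inl (Finset.mem_union_right _
          (Finset.mem_image.2 ⟨e, heM, by rw [hce, hv1]⟩))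
    · -- v uncovered
      have hucov : cov u := by
        by_contra hucov
        have hnew : (u, v) ∉ M := fun h => hucov ⟨(u,v), h, Or.inl rfl⟩
        have hM' : IsMtch G k y (insert (u, v) M) := by
          constructor
          · intro f hf
            rcases Finset.mem_insert.1 hf with rfl | hf
            · exact ⟨hadj, huk, hvk, husum⟩
            · exact hM.1 f hf
          · intro f hf f' hf' hne
            rcases Finset.mem_insert.1 hf with rfl | hf <;>
              rcases Finset.mem_insert.1 hf' with hf' | hf'
            · exact absurd hf'.symm hne
            · obtain ⟨h1, h2⟩ := hnotcov _ hucov f' hf'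
              obtain ⟨h3, h4⟩ := hnotcov _ hvcov f' hf'
              exact ⟨h1, h2, h3, h4⟩
            · subst hf'
              obtain ⟨h1, h2⟩ := hnotcov _ hucov f hf
              obtain ⟨h3, h4⟩ := hnotcov _ hvcov f hf
              exact ⟨h1.symm, h3.symm, h2.symm, h4.symm⟩
            · exact hM.2 f hf f' hf' hne
        have := hmax _ hM'
        rw [Finset.card_insert_of_notMem hnew] at this
        omega
      obtain ⟨e, heM, hue⟩ := hucov
      have he' := hM.1 e heM
      rcases hue with hu1 | hu1
      · -- u = e.1 : need e.1 holds via q := v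
        have hne1 : need e.1 := ⟨v, hvcov, by rw [← hu1]; exact hadj.symm, hvk, by
          rw [← hu1]; omega⟩
        refine Or.inr ⟨e.1, Finset.mem_union_right _
          (Finset.mem_image.2 ⟨e, heM, by simp [hchosen, hne1]⟩), by rw [← hu1]; exact hadj⟩
      · -- u = e.2
        by_cases hne1 : need e.1
        · obtain ⟨q, hqcov, hqadj, hqk, hqsum⟩ := hne1
          by_cases hqv : q = v
          · -- v adjacent to e.1, chosen = e.1
            refine Or.inr ⟨e.1, Finset.mem_union_right _
              (Finset.mem_image.2 ⟨e, heM, by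
                simp only [hchosen]; exact if_pos (⟨q, hqcov, hqadj, hqk, hqsum⟩ : need e.1)⟩), ?_⟩
            rw [← hqv]; exact hqadj.symm
          · -- augmenting path contradiction
            exfalso
            have hq := hnotcov _ hqcov
            have hv := hnotcov _ hvcov
            set M' : Finset (V × V) :=
              insert (q, e.1) (insert (e.2, v) (M.erase e)) with hM'def
            have hmem_erase : ∀ f ∈ M.erase e, f ∈ M ∧ f ≠ e := fun f hf =>
              ⟨Finset.mem_of_mem_erase hf, (Finset.mem_erase.1 hf).1⟩
            have hM' : IsMtch G k y M' := by
              constructor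
              · intro f hf
                rcases Finset.mem_insert.1 hf with rfl | hf
                · exact ⟨hqadj, hqk, he'.2.1, hqsum⟩
                rcases Finset.mem_insert.1 hf with rfl | hf
                · refine ⟨?_, he'.2.2.1, hvk, ?_⟩
                  · change G.Adj e.2 v
                    rw [← hu1]; exact hadj
                  · change k ≤ y e.2 + y v
                    rw [← hu1]; exact husum
                · exact hM.1 f (Finset.mem_of_mem_erase hf)
              · intro f hf f' hf' hne
                have key : ∀ g g' : V × V, g ∈ M' → g' ∈ M' → g ≠ g' →
                    True := fun _ _ _ _ _ => trivial
                -- distinctness facts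
                have hq1 : q ≠ e.1 := (hq e heM).1
                have hq2 : q ≠ e.2 := (hq e heM).2
                have hv1 : v ≠ e.1 := (hv e heM).1
                have hv2 : v ≠ e.2 := (hv e heM).2
                have h12 : e.1 ≠ e.2 := G.ne_of_adj he'.1
                rcases Finset.mem_insert.1 hf with rfl | hf <;>
                  rcases Finset.mem_insert.1 hf' with hf' | hf'
                · exact absurd hf'.symm hne
                · rcases Finset.mem_insert.1 hf' with rfl | hf'
                  · exact ⟨hq2, hqv, h12, hv1.symm⟩
                  · obtain ⟨hf'M, hf'ne⟩ := hmem_erase _ hf'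
                    obtain ⟨a1, a2, a3, a4⟩ := hM.2 e heM f' hf'M (Ne.symm hf'ne)
                    exact ⟨(hq f' hf'M).1, (hq f' hf'M).2, a1, a2⟩
                · subst hf'
                  rcases Finset.mem_insert.1 hf with rfl | hf
                  · exact ⟨hq2.symm, h12.symm, Ne.symm hqv, hv1⟩
                  · obtain ⟨hfM, hfne⟩ := hmem_erase _ hf
                    obtain ⟨a1, a2, a3, a4⟩ := hM.2 e heM f hfM (Ne.symm hfne)
                    exact ⟨(hq f hfM).1.symm, a1.symm, (hq f hfM).2.symm, a2.symm⟩
                · rcases Finset.mem_insert.1 hf with rfl | hf <;>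
                    rcases Finset.mem_insert.1 hf' with rfl | hf'
                  · exact absurd rfl hne
                  · obtain ⟨hf'M, hf'ne⟩ := hmem_erase _ hf'
                    obtain ⟨a1, a2, a3, a4⟩ := hM.2 e heM f' hf'M (Ne.symm hf'ne)
                    exact ⟨a3, a4, (hv f' hf'M).1, (hv f' hf'M).2⟩
                  · obtain ⟨hfM, hfne⟩ := hmem_erase _ hf
                    obtain ⟨a1, a2, a3, a4⟩ := hM.2 e heM f hfM (Ne.symm hfne)
                    exact ⟨a3.symm, (hv f hfM).1.symm, a4.symm, (hv f hfM).2.symm⟩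
                  · exact hM.2 f (Finset.mem_of_mem_erase hf) f'
                      (Finset.mem_of_mem_erase hf') hne
            have hnotin2 : (e.2, v) ∉ M.erase e := by
              intro h
              exact hvcov ⟨(e.2, v), Finset.mem_of_mem_erase h, Or.inr rfl⟩
            have hnotin1 : (q, e.1) ∉ insert (e.2, v) (M.erase e) := by
              intro h
              rcases Finset.mem_insert.1 h with h | h
              · exact (hq e heM).2 (congrArg Prod.fst h)
              · exact hqcov ⟨(q, e.1), Finset.mem_of_mem_erase h, Or.inl rfl⟩
            have hcard := hmax _ hM'
            rw [hM'def, Finset.card_insert_of_notMem hnotin1,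
              Finset.card_insert_of_notMem hnotin2,
              Finset.card_erase_of_mem heM] at hcard
            have hMpos : 1 ≤ M.card := Finset.card_pos.2 ⟨e, heM⟩
            omega
        · -- chosen e = e.2 = u
          refine Or.inr ⟨e.2, Finset.mem_union_right _
            (Finset.mem_image.2 ⟨e, heM, by simp [hchosen, hne1]⟩), by
              rw [← hu1]; exact hadj⟩
  · -- cardinality bound
    set E : Finset V := M.biUnion (fun e => ({e.1, e.2} : Finset V)) with hE
    have hdisjAE : Disjoint A E := by
      rw [Finset.disjoint_left]
      intro a haA haE
      rw [hE, Finset.mem_biUnion] at haE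
      obtain ⟨e, heM, hae⟩ := haE
      have h := hM.1 e heM
      have hak : k ≤ y a := (Finset.mem_filter.1 haA).2
      rcases Finset.mem_insert.1 hae with rfl | hae
      · omega
      · rw [Finset.mem_singleton] at hae; subst hae; omega
    have hpd : (↑M : Set (V × V)).PairwiseDisjoint (fun e : V × V => ({e.1, e.2} : Finset V)) := by
      intro e he e' he' hne
      simp only [Finset.mem_coe] at he he'
      obtain ⟨a1, a2, a3, a4⟩ := hM.2 e he e' he' hne
      simp only [Function.onFun]
      rw [Finset.disjoint_left]
      intro a hae hae'
      rcases Finset.mem_insert.1 hae with rfl | hae <;>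
        rcases Finset.mem_insert.1 hae' with h | h
      · exact a1 h
      · rw [Finset.mem_singleton] at h; exact a2 h
      · rw [Finset.mem_singleton] at hae; subst hae; exact a3 h
      · rw [Finset.mem_singleton] at hae h; subst hae; exact a4 h
    have hEsum : k * M.card ≤ ∑ v ∈ E, y v := by
      rw [hE, Finset.sum_biUnion hpd]
      calc k * M.card = ∑ _e ∈ M, k := by rw [Finset.sum_const, smul_eq_mul, mul_comm]
        _ ≤ ∑ e ∈ M, ∑ v ∈ ({e.1, e.2} : Finset V), y v := by
            apply Finset.sum_le_sum
            intro e he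
            rw [Finset.sum_pair (G.ne_of_adj (hM.1 e he).1)]
            exact (hM.1 e he).2.2.2
    have hAsum : k * A.card ≤ ∑ v ∈ A, y v := by
      calc k * A.card = ∑ _v ∈ A, k := by rw [Finset.sum_const, smul_eq_mul, mul_comm]
        _ ≤ ∑ v ∈ A, y v := Finset.sum_le_sum fun v hv => (Finset.mem_filter.1 hv).2
    have htot : ∑ v ∈ A, y v + ∑ v ∈ E, y v ≤ ∑ v, y v := by
      rw [← Finset.sum_union hdisjAE]
      exact Finset.sum_le_sum_of_subset (Finset.subset_univ _)
    have hDcard : D.card ≤ A.card + M.card := by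
      calc D.card ≤ A.card + (M.image chosen).card := Finset.card_union_le _ _
        _ ≤ A.card + M.card := by
            have := Finset.card_image_le (s := M) (f := chosen)
            omega
    calc k * D.card ≤ k * (A.card + M.card) := Nat.mul_le_mul_left _ hDcard
      _ = k * A.card + k * M.card := Nat.mul_add _ _ _
      _ ≤ ∑ v ∈ A, y v + ∑ v ∈ E, y v := Nat.add_le_add hAsum hEsum
      _ ≤ ∑ v, y v := htot

end Comb
section AL
variable {V : Type*} [Fintype V]

attribute [local instance] Classical.propDecidable

/-- a maximum-cardinality independent subset of a given finset -/
lemma exists_max_indep (G : SimpleGraph V) (X : Finset V) :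
    ∃ I : Finset V, I ⊆ X ∧ (∀ a ∈ I, ∀ b ∈ I, ¬ G.Adj a b) ∧
      (∀ x ∈ X, x ∉ I → ∃ w ∈ I, G.Adj w x) := by
  classical
  set T := X.powerset.filter (fun I => ∀ a ∈ I, ∀ b ∈ I, ¬ G.Adj a b) with hT
  have hTne : T.Nonempty := ⟨∅, by simp [hT]⟩
  obtain ⟨I, hIT, hImax⟩ := T.exists_max_image Finset.card hTne
  rw [hT, Finset.mem_filter, Finset.mem_powerset] at hIT
  refine ⟨I, hIT.1, hIT.2, ?_⟩
  intro x hxX hxI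
  by_contra hno
  push_neg at hno
  have hins : insert x I ∈ T := by
    rw [hT, Finset.mem_filter, Finset.mem_powerset]
    refine ⟨Finset.insert_subset hxX hIT.1, ?_⟩
    intro a ha b hb
    rcases Finset.mem_insert.1 ha with rfl | haI
    · rcases Finset.mem_insert.1 hb with rfl | hbI
      · exact G.loopless.irrefl _
      · intro hadj; exact hno b hbI hadj.symm
    · rcases Finset.mem_insert.1 hb with rfl | hbI
      · intro hadj; exact hno a haI hadj
      · exact hIT.2 a haI b hbI
  have := hImax _ hins
  rw [Finset.card_insert_of_notMem hxI] at this
  omega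

lemma allan_laskar (G : SimpleGraph V) (hG : ClawFree G) (D : Finset V)
    (hD : ∀ v : V, v ∈ D ∨ ∃ u ∈ D, G.Adj u v) :
    ∃ S : Finset V, (∀ a ∈ S, ∀ b ∈ S, ¬ G.Adj a b) ∧
      (∀ v : V, v ∉ S → ∃ u ∈ S, G.Adj u v) ∧ S.card ≤ D.card := by
  classical
  obtain ⟨I, hID, hIind, hImax⟩ := exists_max_indep G D
  set X : Finset V := Finset.univ.filter (fun v => v ∉ I ∧ ∀ w ∈ I, ¬ G.Adj w v) with hX
  obtain ⟨J, hJX, hJind, hJmax⟩ := exists_max_indep G X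
  have hJprop : ∀ j ∈ J, j ∉ I ∧ ∀ w ∈ I, ¬ G.Adj w j := by
    intro j hj
    have := hJX hj
    rw [hX, Finset.mem_filter] at this
    exact this.2
  refine ⟨I ∪ J, ?_, ?_, ?_⟩
  · -- independence
    intro a ha b hb
    rcases Finset.mem_union.1 ha with ha | ha <;> rcases Finset.mem_union.1 hb with hb | hb
    · exact hIind a ha b hb
    · exact (hJprop b hb).2 a ha
    · intro hadj; exact (hJprop a ha).2 b hb hadj.symm
    · exact hJind a ha b hb
  · -- domination
    intro v hv
    rw [Finset.mem_union] at hv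
    push_neg at hv
    by_cases hvI : ∃ w ∈ I, G.Adj w v
    · obtain ⟨w, hw, hadj⟩ := hvI
      exact ⟨w, Finset.mem_union_left _ hw, hadj⟩
    · push_neg at hvI
      have hvX : v ∈ X := by
        rw [hX, Finset.mem_filter]
        exact ⟨Finset.mem_univ _, hv.1, hvI⟩
      obtain ⟨w, hw, hadj⟩ := hJmax v hvX hv.2
      exact ⟨w, Finset.mem_union_right _ hw, hadj⟩
  · -- cardinality
    have hdom : ∀ j ∈ J, ∃ d, d ∈ D ∧ d ∉ I ∧ (d = j ∨ G.Adj d j) := by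
      intro j hj
      rcases hD j with hjD | ⟨u, huD, hadj⟩
      · exact ⟨j, hjD, (hJprop j hj).1, Or.inl rfl⟩
      · refine ⟨u, huD, ?_, Or.inr hadj⟩
        intro huI
        exact (hJprop j hj).2 u huI hadj
    set f : V → V := fun j => if h : ∃ d, d ∈ D ∧ d ∉ I ∧ (d = j ∨ G.Adj d j)
      then Classical.choose h else j with hf
    have hfmem : ∀ j ∈ J, f j ∈ D \ I ∧ (f j = j ∨ G.Adj (f j) j) := by
      intro j hj
      have h := hdom j hj
      rw [hf]
      simp only [dif_pos h]
      obtain ⟨h1, h2, h3⟩ := Classical.choose_spec h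
      exact ⟨Finset.mem_sdiff.2 ⟨h1, h2⟩, h3⟩
    have hinj : Set.InjOn f ↑J := by
      intro j1 hj1 j2 hj2 hfeq
      simp only [Finset.mem_coe] at hj1 hj2
      by_contra hne
      obtain ⟨hd1, hc1⟩ := hfmem j1 hj1
      obtain ⟨hd2, hc2⟩ := hfmem j2 hj2
      rw [← hfeq] at hc2
      have hjadj : ¬ G.Adj j1 j2 := hJind j1 hj1 j2 hj2
      rcases hc1 with h1 | hadj1
      · rcases hc2 with h2 | hadj2
        · exact hne (h1.symm.trans h2)
        · rw [h1] at hadj2; exact hjadj hadj2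
      · rcases hc2 with h2 | hadj2
        · rw [h2] at hadj1; exact hjadj hadj1.symm
        · -- claw
          obtain ⟨w, hwI, hwadj⟩ := hImax (f j1) (Finset.mem_sdiff.1 hd1).1
            (Finset.mem_sdiff.1 hd1).2
          refine hG ⟨f j1, w, j1, j2, hwadj.symm, hadj1, hadj2, ?_, ?_, ?_, ?_, ?_, ?_⟩
          · exact (hJprop j1 hj1).2 w hwI
          · exact (hJprop j2 hj2).2 w hwI
          · exact hjadj
          · exact fun h => (hJprop j1 hj1).1 (h ▸ hwI)
          · exact fun h => (hJprop j2 hj2).1 (h ▸ hwI)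
          · exact hne
    have hJle : J.card ≤ (D \ I).card := by
      apply Finset.card_le_card_of_injOn f (fun j hj => (hfmem j hj).1) hinj
    have hsd : (D \ I).card = D.card - I.card := Finset.card_sdiff_of_subset hID
    have hIle : I.card ≤ D.card := Finset.card_le_card hID
    have := Finset.card_union_le I J
    omega

end AL
section Main
variable {V : Type*} [Fintype V] {K : Type*} [Field K]

attribute [local instance] Classical.propDecidable

/-- the indicator of the complement of `S`, scaled by `k` -/
noncomputable def compInd [Fintype V] (S : Finset V) (k : ℕ) : V →₀ ℕ :=
  Finsupp.equivFunOnFinite.symm (fun v => if v ∈ S then 0 else k)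

lemma compInd_apply (S : Finset V) (k : ℕ) (v : V) :
    compInd S k v = if v ∈ S then 0 else k := rfl

lemma compInd_isMinGen (G : SimpleGraph V) (S : Finset V) (k : ℕ) (hk : 1 ≤ k)
    (hind : ∀ a ∈ S, ∀ b ∈ S, ¬ G.Adj a b)
    (hdom : ∀ v : V, v ∉ S → ∃ u ∈ S, G.Adj u v) :
    IsMinGen (symbPow K G k) (compInd S k) ∧ mdeg (compInd S k) = k * Sᶜ.card := by
  constructor
  · rw [isMinGen_symbPow_iff]
    constructor
    · intro a b hab
      by_cases haS : a ∈ S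
      · have hbS : b ∉ S := fun hbS => hind a haS b hbS hab
        simp [compInd_apply, haS, hbS]
      · simp only [compInd_apply, if_neg haS]
        omega
    · intro i hi
      have hiS : i ∉ S := by
        intro h
        rw [compInd_apply, if_pos h] at hi
        exact hi rfl
      obtain ⟨u, huS, hadj⟩ := hdom i hiS
      have hui : ¬ (i = u) := fun h => hiS (h ▸ huS)
      refine ⟨u, i, hadj, ?_⟩
      rw [Finsupp.tsub_apply, Finsupp.tsub_apply, compInd_apply, compInd_apply,
        Finsupp.single_apply, Finsupp.single_apply, if_pos huS, if_neg hiS,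
        if_neg hui, if_pos rfl]
      omega
  · rw [mdeg_eq_sum]
    have h1 : ∑ v ∈ S, compInd S k v + ∑ v ∈ Sᶜ, compInd S k v = ∑ v, compInd S k v :=
      Finset.sum_add_sum_compl S _
    have h2 : ∑ v ∈ S, compInd S k v = 0 :=
      Finset.sum_eq_zero fun v hv => by rw [compInd_apply, if_pos hv]
    have h3 : ∑ v ∈ Sᶜ, compInd S k v = k * Sᶜ.card := by
      rw [Finset.sum_congr rfl (fun v hv => by
        rw [compInd_apply, if_neg (Finset.mem_compl.1 hv)]), Finset.sum_const,
        smul_eq_mul, mul_comm]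
    omega

lemma smul_isMinGen (G : SimpleGraph V) (k : ℕ) (hk : 1 ≤ k) (u : V →₀ ℕ)
    (hu : IsMinGen (coverIdeal K G) u) :
    IsMinGen (symbPow K G k) (k • u) ∧ mdeg (k • u) = k * mdeg u := by
  rw [cover_eq_symbPow, isMinGen_symbPow_iff] at hu
  obtain ⟨h1, h2⟩ := hu
  have happ : ∀ v, (k • u) v = k * u v := fun v => by
    rw [Finsupp.smul_apply, smul_eq_mul]
  constructor
  · rw [isMinGen_symbPow_iff]
    constructor
    · intro a b hab
      have h := h1 a b hab
      rw [happ, happ, ← Nat.mul_add]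
      calc k = k * 1 := (mul_one k).symm
        _ ≤ k * (u a + u b) := Nat.mul_le_mul le_rfl h
    · intro i hi
      have hui : u i ≠ 0 := by
        intro h
        rw [happ, h, mul_zero] at hi
        exact hi rfl
      obtain ⟨hle, w, hadj, hsum⟩ := tight_structure h1 hui (h2 i hui)
      have hui1 : u i = 1 := by omega
      have huw0 : u w = 0 := by omega
      refine ⟨i, w, hadj, ?_⟩
      rw [Finsupp.tsub_apply, Finsupp.tsub_apply, happ, happ, hui1, huw0,
        Finsupp.single_apply, Finsupp.single_apply, if_pos rfl,
        if_neg (G.ne_of_adj hadj)]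
      omega
  · rw [mdeg_eq_sum, mdeg_eq_sum, Finset.mul_sum]
    exact Finset.sum_congr rfl fun v _ => happ v

lemma minGen_le (G : SimpleGraph V) (k : ℕ) (m : V →₀ ℕ)
    (h : IsMinGen (symbPow K G k) m) : ∀ v, m v ≤ k := by
  rw [isMinGen_symbPow_iff] at h
  intro v
  by_cases hv : m v = 0
  · omega
  · exact (tight_structure h.1 hv (h.2 v hv)).1

lemma bddAbove_degset (G : SimpleGraph V) (k : ℕ) :
    BddAbove {d : ℕ | ∃ m : V →₀ ℕ, IsMinGen (symbPow K G k) m ∧ mdeg m = d} := by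
  refine ⟨k * Fintype.card V, fun d hd => ?_⟩
  obtain ⟨m, hm, rfl⟩ := hd
  rw [mdeg_eq_sum]
  calc ∑ v, m v ≤ ∑ _v : V, k := Finset.sum_le_sum fun v _ => minGen_le G k m hm v
    _ = Fintype.card V * k := by rw [Finset.sum_const, smul_eq_mul, Finset.card_univ]
    _ = k * Fintype.card V := mul_comm _ _

lemma mdeg_le_of_minGen (G : SimpleGraph V) (hG : ClawFree G) (k : ℕ) (hk : 1 ≤ k)
    (m : V →₀ ℕ) (hm : IsMinGen (symbPow K G k) m) :
    mdeg m ≤ k * genDeg (coverIdeal K G) := by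
  have hmle : ∀ v, m v ≤ k := minGen_le G k m hm
  rw [isMinGen_symbPow_iff] at hm
  set y : V → ℕ := fun v => k - m v with hy
  have H : ∀ v : V, k ≤ y v ∨ ∃ u : V, G.Adj u v ∧ k ≤ y u + y v := by
    intro v
    by_cases hv : m v = 0
    · left; simp [hy, hv]
    · right
      obtain ⟨hle, u, hadj, hsum⟩ := tight_structure hm.1 hv (hm.2 v hv)
      refine ⟨u, hadj.symm, ?_⟩
      have h := hmle u
      simp only [hy]
      omega
  obtain ⟨D, hDdom, hDcard⟩ := exists_dominating G k y H
  obtain ⟨S, hSind, hSdom, hScard⟩ := allan_laskar G hG D hDdom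
  have hmin := compInd_isMinGen (K := K) G S 1 le_rfl hSind hSdom
  have hSc : Sᶜ.card ≤ genDeg (coverIdeal K G) := by
    have hmem : Sᶜ.card ∈ {d : ℕ | ∃ m : V →₀ ℕ, IsMinGen (coverIdeal K G) m ∧ mdeg m = d} :=
      ⟨compInd S 1, by rw [cover_eq_symbPow]; exact hmin.1, by rw [hmin.2, one_mul]⟩
    have hbdd : BddAbove {d : ℕ | ∃ m : V →₀ ℕ, IsMinGen (coverIdeal K G) m ∧ mdeg m = d} := by
      simp only [cover_eq_symbPow (K := K) (G := G)]
      exact bddAbove_degset G 1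
    exact le_csSup hbdd hmem
  have hsum : mdeg m + ∑ v, y v = k * Fintype.card V := by
    rw [mdeg_eq_sum, ← Finset.sum_add_distrib]
    calc ∑ v, (m v + y v) = ∑ _v : V, k := Finset.sum_congr rfl fun v _ => by
          have h := hmle v
          simp only [hy]
          omega
      _ = k * Fintype.card V := by
          rw [Finset.sum_const, smul_eq_mul, Finset.card_univ, mul_comm]
  have hcompl : S.card + Sᶜ.card = Fintype.card V := Finset.card_add_card_compl S
  have h1 : k * S.card ≤ ∑ v, y v :=
    le_trans (Nat.mul_le_mul le_rfl hScard) hDcard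
  have h3 : k * Fintype.card V = k * S.card + k * Sᶜ.card := by
    rw [← hcompl, Nat.mul_add]
  have h2 : mdeg m ≤ k * Sᶜ.card := by omega
  exact le_trans h2 (Nat.mul_le_mul le_rfl hSc)

end Main

/-- Corollary `deguc`, claw-free case: if `G` is a claw-free finite simple
graph, then `deg (J(G)^{(k)}) = k * deg (J(G))` for every `k ≥ 1`; in particular,
`deg (J(G)^{(k)})` is a linear function of `k`. -/
theorem statement2 {V : Type*} [Fintype V] (K : Type*) [Field K] (G : SimpleGraph V)
    (hG : ClawFree G) (k : ℕ) (hk : 1 ≤ k) :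
    genDeg (symbPow K G k) = k * genDeg (coverIdeal K G) := by
  classical
  apply le_antisymm
  · show sSup _ ≤ _
    rcases Set.eq_empty_or_nonempty
      {d : ℕ | ∃ m : V →₀ ℕ, IsMinGen (symbPow K G k) m ∧ mdeg m = d} with he | hne
    · rw [he, csSup_empty]
      exact Nat.zero_le _
    · refine csSup_le hne ?_
      rintro d ⟨m, hm, rfl⟩
      exact mdeg_le_of_minGen G hG k hk m hm
  · rcases Set.eq_empty_or_nonempty
      {d : ℕ | ∃ m : V →₀ ℕ, IsMinGen (coverIdeal K G) m ∧ mdeg m = d} with he | hne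
    · have h0 : genDeg (coverIdeal K G) = 0 := by
        rw [show genDeg (coverIdeal K G)
            = sSup {d : ℕ | ∃ m : V →₀ ℕ, IsMinGen (coverIdeal K G) m ∧ mdeg m = d} from rfl,
          he, csSup_empty]
        rfl
      rw [h0, mul_zero]
      exact Nat.zero_le _
    · have hbdd : BddAbove {d : ℕ | ∃ m : V →₀ ℕ, IsMinGen (coverIdeal K G) m ∧ mdeg m = d} := by
        simp only [cover_eq_symbPow (K := K) (G := G)]
        exact bddAbove_degset G 1
      have hmem := Nat.sSup_mem hne hbdd
      obtain ⟨u, hu, hude⟩ := hmem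
      obtain ⟨hmin, hdeg⟩ := smul_isMinGen G k hk u hu
      calc k * genDeg (coverIdeal K G)
          = k * mdeg u := by
            rw [show genDeg (coverIdeal K G)
              = sSup {d : ℕ | ∃ m : V →₀ ℕ, IsMinGen (coverIdeal K G) m ∧ mdeg m = d} from rfl,
              ← hude]
        _ = mdeg (k • u) := hdeg.symm
        _ ≤ genDeg (symbPow K G k) := le_csSup (bddAbove_degset G k) ⟨k • u, hmin, rfl⟩
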